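/- Let G be a finite simple graph. There exist vectors ψ_{y,z} ∈ ℂ³, indexed by the vertices y of G' and z ∈ {1,2,3}, such that the matrix with entries |⟨ψ_{y,z}, ψ_{y',z'}⟩|² fits Δ(G'), if and only if there exist a quantum state ρ on ℂ³⊗ℂ³ (a positive semidefinite complex 9×9 matrix of trace 1) and, for each vertex y of G', two 3-dimensional POVMs (E_{y,1}, E_{y,2}, E_{y,3}) and (F_{y,1}, F_{y,2}, F_{y,3}) such that the matrix M with entries M_{(y,z),(y',z')} = 3·tr(ρ (E_{y,z} ⊗ F_{y',z'})) fits Δ(G'), where ⊗ denotes the Kronecker product. -/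

import Mathlib

open Matrix
open scoped ComplexOrder

/-- Vertices of the graph `G'`: the original vertices of `G` together with, for every
pair `{i,j}` of distinct vertices (represented as `i < j`), four new gadget vertices
`a_{ij}, b_{ij}, c_{ij}, d_{ij}` encoded as `Fin 4` (`0 = a`, `1 = b`, `2 = c`, `3 = d`). -/
abbrev GVert (n : ℕ) := Fin n ⊕ ({p : Fin n × Fin n // p.1 < p.2} × Fin 4)

/-- The edges of `G'`: the original edges of `G`, and for every pair `i < j` the nine
gadget edges `{i,a},{i,b},{i,d},{a,b},{a,j},{b,c},{c,d},{c,j},{d,j}`. -/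
def gadgetRel {n : ℕ} (G : SimpleGraph (Fin n)) : GVert n → GVert n → Prop
  | Sum.inl i, Sum.inl j => G.Adj i j
  | Sum.inl v, Sum.inr (⟨(i, j), _⟩, k) =>
      (v = i ∧ (k = 0 ∨ k = 1 ∨ k = 3)) ∨ (v = j ∧ (k = 0 ∨ k = 2 ∨ k = 3))
  | Sum.inr (p, k), Sum.inr (q, l) =>
      p = q ∧ ((k = 0 ∧ l = 1) ∨ (k = 1 ∧ l = 2) ∨ (k = 2 ∧ l = 3))
  | _, _ => False

/-- The graph `G'` obtained from `G` by inserting the gadget `H_{ij}` for every pair of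
distinct vertices `i, j` of `G`. -/
def gadgetGraph {n : ℕ} (G : SimpleGraph (Fin n)) : SimpleGraph (GVert n) :=
  SimpleGraph.fromRel (gadgetRel G)

/-- The triangle decoration `Δ(H)` of a graph `H`: each vertex `w` becomes the triangle
`(w,1),(w,2),(w,3)` (here `(w,0),(w,1),(w,2)`), with `(w,0)` identified with `w`. -/
def triDec {W : Type*} (H : SimpleGraph W) : SimpleGraph (W × Fin 3) :=
  SimpleGraph.fromRel fun a b =>
    (a.2 = 0 ∧ b.2 = 0 ∧ H.Adj a.1 b.1) ∨ (a.1 = b.1 ∧ a.2 ≠ b.2)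

/-- A matrix `A` fits a graph `H` if all its diagonal entries are `1` and `A v w = 0`
whenever `{v,w}` is an edge of `H`. -/
def Fits {V R : Type*} [Zero R] [One R] (H : SimpleGraph V) (A : Matrix V V R) : Prop :=
  (∀ v, A v v = 1) ∧ ∀ v w, H.Adj v w → A v w = 0

/-- A `d`-dimensional quantum state: a positive semidefinite complex `d × d` matrix of trace 1. -/
def IsState {d : ℕ} (ρ : Matrix (Fin d) (Fin d) ℂ) : Prop :=
  ρ.PosSemidef ∧ ρ.trace = 1

/-- A `d`-dimensional POVM with `Z` outcomes: positive semidefinite complex `d × d` matrices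
summing to the identity. -/
def IsPOVM {d Z : ℕ} (E : Fin Z → Matrix (Fin d) (Fin d) ℂ) : Prop :=
  (∀ z, (E z).PosSemidef) ∧ ∑ z, E z = 1

section Aux5

set_option linter.unusedSectionVars false

open Kronecker
open scoped MatrixOrder

variable {m n : Type*} [Fintype m] [Fintype n] [DecidableEq m] [DecidableEq n]

lemma aux5_eq_zero_of_trace {X : Matrix m n ℂ} (h : (Xᴴ * X).trace = 0) : X = 0 := by
  have h' : ∑ j, (star fun i => X i j) ⬝ᵥ (fun i => X i j) = 0 := by
    simpa [Matrix.trace, Matrix.mul_apply, Matrix.conjTranspose_apply, dotProduct,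
      Matrix.diag] using h
  have hnn : ∀ j ∈ Finset.univ, (0:ℂ) ≤ (star fun i => X i j) ⬝ᵥ (fun i => X i j) :=
    fun j _ => dotProduct_star_self_nonneg _
  have hz := (Finset.sum_eq_zero_iff_of_nonneg hnn).mp h'
  ext i j
  have := dotProduct_star_self_eq_zero.mp (hz j (Finset.mem_univ j))
  exact congrFun this i

lemma aux5_kill {ρ S : Matrix m m ℂ} (hρ : ρ.PosSemidef) (hS : S.PosSemidef)
    (h : (ρ * S).trace = 0) : S * ρ = 0 := by
  have hsr : CFC.sqrt S * CFC.sqrt ρ = 0 := by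
    apply aux5_eq_zero_of_trace
    have h1 : (CFC.sqrt S * CFC.sqrt ρ)ᴴ * (CFC.sqrt S * CFC.sqrt ρ) = CFC.sqrt ρ * S * CFC.sqrt ρ := by
      rw [conjTranspose_mul, (CFC.sqrt_nonneg ρ).posSemidef.1, (CFC.sqrt_nonneg S).posSemidef.1]
      rw [mul_assoc, ← mul_assoc (CFC.sqrt S), CFC.sqrt_mul_sqrt_self S hS.nonneg, ← mul_assoc]
    rw [h1, Matrix.trace_mul_cycle, CFC.sqrt_mul_sqrt_self ρ hρ.nonneg]
    exact h
  have hSρ : S * ρ = CFC.sqrt S * (CFC.sqrt S * CFC.sqrt ρ) * CFC.sqrt ρ := by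
    rw [← mul_assoc, CFC.sqrt_mul_sqrt_self S hS.nonneg, mul_assoc, CFC.sqrt_mul_sqrt_self ρ hρ.nonneg]
  rw [hSρ, hsr, mul_zero, zero_mul]

lemma aux5_kron_conjT (A : Matrix m m ℂ) (B : Matrix n n ℂ) : (A ⊗ₖ B)ᴴ = Aᴴ ⊗ₖ Bᴴ := by
  ext i j
  simp [conjTranspose_apply, star_mul']

lemma aux5_kron_psd {A : Matrix m m ℂ} {B : Matrix n n ℂ} (hA : A.PosSemidef)
    (hB : B.PosSemidef) : (A ⊗ₖ B).PosSemidef := by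
  have h : A ⊗ₖ B = (CFC.sqrt A ⊗ₖ CFC.sqrt B)ᴴ * (CFC.sqrt A ⊗ₖ CFC.sqrt B) := by
    rw [aux5_kron_conjT, (CFC.sqrt_nonneg A).posSemidef.1, (CFC.sqrt_nonneg B).posSemidef.1, ← mul_kronecker_mul,
      CFC.sqrt_mul_sqrt_self A hA.nonneg, CFC.sqrt_mul_sqrt_self B hB.nonneg]
  rw [h]
  exact posSemidef_conjTranspose_mul_self _

lemma aux5_kron_sum_right {Z : Type*} [Fintype Z] (A : Matrix m m ℂ) (Bf : Z → Matrix n n ℂ) :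
    A ⊗ₖ (∑ z, Bf z) = ∑ z, A ⊗ₖ Bf z := by
  ext i j
  simp [Matrix.sum_apply, Finset.mul_sum]

lemma aux5_kron_sum_left {Z : Type*} [Fintype Z] (Af : Z → Matrix m m ℂ) (B : Matrix n n ℂ) :
    (∑ z, Af z) ⊗ₖ B = ∑ z, Af z ⊗ₖ B := by
  ext i j
  simp [Matrix.sum_apply, Finset.sum_mul]

/-- partial trace over the second factor -/
noncomputable def ptr5 (ρ : Matrix (Fin 3 × Fin 3) (Fin 3 × Fin 3) ℂ) : Matrix (Fin 3) (Fin 3) ℂ :=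
  Matrix.of fun i i' => ∑ j, ρ (i, j) (i', j)

lemma ptr5_trace (ρ : Matrix (Fin 3 × Fin 3) (Fin 3 × Fin 3) ℂ) : (ptr5 ρ).trace = ρ.trace := by
  simp [ptr5, Matrix.trace, Matrix.diag, Fintype.sum_prod_type]

lemma ptr5_zero : ptr5 0 = 0 := by
  ext i i'
  simp [ptr5]

lemma ptr5_herm {ρ : Matrix (Fin 3 × Fin 3) (Fin 3 × Fin 3) ℂ} (h : ρ.IsHermitian) :
    (ptr5 ρ)ᴴ = ptr5 ρ := by
  ext i i'
  simp only [ptr5, conjTranspose_apply, Matrix.of_apply, star_sum]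
  refine Finset.sum_congr rfl fun j _ => ?_
  calc star (ρ (i', j) (i, j)) = ρᴴ (i, j) (i', j) := rfl
    _ = ρ (i, j) (i', j) := by rw [h]

lemma ptr5_kron_one_mul (C : Matrix (Fin 3) (Fin 3) ℂ)
    (ρ : Matrix (Fin 3 × Fin 3) (Fin 3 × Fin 3) ℂ) :
    ptr5 ((C ⊗ₖ (1 : Matrix (Fin 3) (Fin 3) ℂ)) * ρ) = C * ptr5 ρ := by
  ext i i'
  simp only [ptr5, Matrix.of_apply, Matrix.mul_apply, Fintype.sum_prod_type,
    kroneckerMap_apply, one_apply, mul_ite, mul_one, mul_zero, ite_mul, zero_mul,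
    Finset.sum_ite_eq, Finset.mem_univ, if_true, Finset.mul_sum]
  exact Finset.sum_comm

lemma triDec_adj_triangle {W : Type*} (H : SimpleGraph W) (y : W) {z z' : Fin 3} (h : z ≠ z') :
    (triDec H).Adj (y, z) (y, z') := by
  rw [triDec, SimpleGraph.fromRel_adj]
  exact ⟨fun hc => h (congrArg Prod.snd hc), Or.inl (Or.inr ⟨rfl, h⟩)⟩

lemma aux5_conj_sum (u v : Fin 3 → ℂ) :
    ∑ i, u i * (starRingEnd ℂ) (v i) = (starRingEnd ℂ) (∑ i, (starRingEnd ℂ) (u i) * v i) := by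
  rw [map_sum]
  exact Finset.sum_congr rfl fun i _ => by rw [_root_.map_mul, Complex.conj_conj]

end Aux5

open Kronecker in
theorem stmt5 {n : ℕ} (G : SimpleGraph (Fin n)) :
    (∃ ψ : GVert n → Fin 3 → (Fin 3 → ℂ),
        Fits (triDec (gadgetGraph G))
          (Matrix.of fun a b : GVert n × Fin 3 =>
            (‖∑ j, (starRingEnd ℂ) (ψ a.1 a.2 j) * ψ b.1 b.2 j‖) ^ 2)) ↔
      ∃ (ρ : Matrix (Fin 3 × Fin 3) (Fin 3 × Fin 3) ℂ)
        (E F : GVert n → Fin 3 → Matrix (Fin 3) (Fin 3) ℂ),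
        ρ.PosSemidef ∧ ρ.trace = 1 ∧
        (∀ y, IsPOVM (E y)) ∧ (∀ y, IsPOVM (F y)) ∧
        Fits (triDec (gadgetGraph G))
          (Matrix.of fun a b : GVert n × Fin 3 =>
            3 * (ρ * (E a.1 a.2 ⊗ₖ F b.1 b.2)).trace) := by
  classical
  constructor
  · -- forward direction
    rintro ⟨ψ, hFits⟩
    -- the complex Gram values
    set g : (GVert n × Fin 3) → (GVert n × Fin 3) → ℂ :=
      fun a b => ∑ j, (starRingEnd ℂ) (ψ a.1 a.2 j) * ψ b.1 b.2 j with hg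
    have hdiagC : ∀ a, g a a = 1 := by
      intro a
      have h1 : (‖g a a‖) ^ 2 = 1 := hFits.1 a
      set r : ℝ := ∑ j, Complex.normSq (ψ a.1 a.2 j) with hrr
      have hs : g a a = (r : ℂ) := by
        rw [hg, hrr]
        push_cast
        exact Finset.sum_congr rfl fun j _ => Complex.normSq_eq_conj_mul_self.symm
      have hrnn : 0 ≤ r := Finset.sum_nonneg fun j _ => Complex.normSq_nonneg _
      rw [hs, Complex.norm_real, Real.norm_eq_abs, abs_of_nonneg hrnn] at h1
      have hfac : (r - 1) * (r + 1) = 0 := by linear_combination h1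
      rcases mul_eq_zero.mp hfac with h' | h'
      · rw [hs]
        norm_cast
        linarith
      · exfalso; linarith
    have hedgeC : ∀ a b, (triDec (gadgetGraph G)).Adj a b → g a b = 0 := by
      intro a b hab
      have h := hFits.2 a b hab
      have h2 : ‖g a b‖ = 0 := (pow_eq_zero_iff two_ne_zero).mp h
      exact norm_eq_zero.mp h2
    -- orthonormality within triangles
    have hortho : ∀ (y : GVert n) (z z' : Fin 3), z ≠ z' → g (y, z) (y, z') = 0 :=
      fun y z z' h => hedgeC (y, z) (y, z') (triDec_adj_triangle _ y h)
    -- the measurement operators and the maximally entangled state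
    set c : ℂ := ((Real.sqrt 3 : ℝ) : ℂ)⁻¹ with hcdef
    have hcc : c * c = (3 : ℂ)⁻¹ := by
      have h3 : ((Real.sqrt 3 : ℝ) : ℂ) * ((Real.sqrt 3 : ℝ) : ℂ) = 3 := by
        rw [← Complex.ofReal_mul, Real.mul_self_sqrt (by norm_num : (0:ℝ) ≤ 3)]
        norm_num
      rw [hcdef, ← mul_inv, h3]
    have hcstar : (starRingEnd ℂ) c = c := by
      rw [hcdef, map_inv₀, Complex.conj_ofReal]
    set ρm : Matrix (Fin 3 × Fin 3) (Fin 3 × Fin 3) ℂ :=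
      Matrix.of fun p q : Fin 3 × Fin 3 =>
        (if p.1 = p.2 then c else 0) * (if q.1 = q.2 then c else 0) with hρm
    set Em : GVert n → Fin 3 → Matrix (Fin 3) (Fin 3) ℂ :=
      fun y z => Matrix.of fun i j => ψ y z i * (starRingEnd ℂ) (ψ y z j) with hEm
    set Fm : GVert n → Fin 3 → Matrix (Fin 3) (Fin 3) ℂ :=
      fun y z => Matrix.of fun i j => (starRingEnd ℂ) (ψ y z i) * ψ y z j with hFm
    refine ⟨ρm, Em, Fm, ?_, ?_, ?_, ?_, ?_⟩
    · -- ρ PSD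
      have h : ρm = (Matrix.of fun (_ : Fin 1) (p : Fin 3 × Fin 3) =>
          if p.1 = p.2 then c else 0)ᴴ * (Matrix.of fun (_ : Fin 1) (p : Fin 3 × Fin 3) =>
          if p.1 = p.2 then c else 0) := by
        ext p q
        simp [hρm, Matrix.mul_apply, Matrix.conjTranspose_apply, apply_ite (starRingEnd ℂ),
          hcstar, ite_mul, mul_ite, zero_mul, mul_zero]
      rw [h]
      exact posSemidef_conjTranspose_mul_self _
    · -- trace 1
      have h : ρm.trace = ∑ i : Fin 3, c * c := by
        simp [Matrix.trace, Matrix.diag, hρm, Fintype.sum_prod_type, Finset.sum_ite_eq]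
      rw [h, hcc]
      simp
    · -- E is a POVM
      intro y
      constructor
      · intro z
        have h : Em y z = (Matrix.of fun (_ : Fin 1) (j : Fin 3) =>
            (starRingEnd ℂ) (ψ y z j))ᴴ * (Matrix.of fun (_ : Fin 1) (j : Fin 3) =>
            (starRingEnd ℂ) (ψ y z j)) := by
          ext i j
          simp [hEm, Matrix.mul_apply, Matrix.conjTranspose_apply]
        rw [h]
        exact posSemidef_conjTranspose_mul_self _
      · -- sum to 1
        set V : Matrix (Fin 3) (Fin 3) ℂ :=
          Matrix.of fun z i => (starRingEnd ℂ) (ψ y z i) with hV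
        have hVV : V * Vᴴ = 1 := by
          ext z z'
          by_cases h : z = z'
          · subst h
            have := hdiagC (y, z)
            simp only [hV, Matrix.mul_apply, Matrix.conjTranspose_apply, Matrix.of_apply,
              Complex.star_def, Complex.conj_conj, Matrix.one_apply_eq]
            calc ∑ i, (starRingEnd ℂ) (ψ y z i) * ψ y z i = g (y, z) (y, z) := rfl
              _ = 1 := hdiagC (y, z)
          · have := hortho y z z' h
            simp only [hV, Matrix.mul_apply, Matrix.conjTranspose_apply, Matrix.of_apply,
              Complex.star_def, Complex.conj_conj, Matrix.one_apply_ne h]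
            calc ∑ i, (starRingEnd ℂ) (ψ y z i) * ψ y z' i = g (y, z) (y, z') := rfl
              _ = 0 := hortho y z z' h
        have hV1 : Vᴴ * V = 1 := mul_eq_one_comm.mp hVV
        ext i j
        rw [Matrix.sum_apply]
        calc ∑ z, Em y z i j = (Vᴴ * V) i j := by
              simp [hEm, hV, Matrix.mul_apply, Matrix.conjTranspose_apply, mul_comm]
          _ = (1 : Matrix (Fin 3) (Fin 3) ℂ) i j := by rw [hV1]
    · -- F is a POVM
      intro y
      constructor
      · intro z
        have h : Fm y z = (Matrix.of fun (_ : Fin 1) (j : Fin 3) =>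
            ψ y z j)ᴴ * (Matrix.of fun (_ : Fin 1) (j : Fin 3) => ψ y z j) := by
          ext i j
          simp [hFm, Matrix.mul_apply, Matrix.conjTranspose_apply]
        rw [h]
        exact posSemidef_conjTranspose_mul_self _
      · set V : Matrix (Fin 3) (Fin 3) ℂ := Matrix.of fun z i => ψ y z i with hV
        have hVV : V * Vᴴ = 1 := by
          ext z z'
          have hcs : ∑ i, ψ y z i * (starRingEnd ℂ) (ψ y z' i)
              = (starRingEnd ℂ) (g (y, z) (y, z')) := aux5_conj_sum _ _
          by_cases h : z = z'
          · subst h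
            simp only [hV, Matrix.mul_apply, Matrix.conjTranspose_apply, Matrix.of_apply,
              Complex.star_def, Matrix.one_apply_eq]
            rw [hcs, hdiagC (y, z), _root_.map_one]
          · simp only [hV, Matrix.mul_apply, Matrix.conjTranspose_apply, Matrix.of_apply,
              Complex.star_def, Matrix.one_apply_ne h]
            rw [hcs, hortho y z z' h, _root_.map_zero]
        have hV1 : Vᴴ * V = 1 := mul_eq_one_comm.mp hVV
        ext i j
        rw [Matrix.sum_apply]
        calc ∑ z, Fm y z i j = (Vᴴ * V) i j := by
              simp [hFm, hV, Matrix.mul_apply, Matrix.conjTranspose_apply, mul_comm]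
          _ = (1 : Matrix (Fin 3) (Fin 3) ℂ) i j := by rw [hV1]
    · -- the fitting condition
      have hval : ∀ a b : GVert n × Fin 3,
          (ρm * (Em a.1 a.2 ⊗ₖ Fm b.1 b.2)).trace
            = (3 : ℂ)⁻¹ * ((starRingEnd ℂ) (g a b) * g a b) := by
        intro a b
        have h1 : (ρm * (Em a.1 a.2 ⊗ₖ Fm b.1 b.2)).trace
            = ∑ i : Fin 3, ∑ k : Fin 3, (c * c) *
              ((ψ a.1 a.2 k * (starRingEnd ℂ) (ψ a.1 a.2 i)) *
               ((starRingEnd ℂ) (ψ b.1 b.2 k) * ψ b.1 b.2 i)) := by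
          simp [Matrix.trace, Matrix.diag, Matrix.mul_apply, hρm, hEm, hFm,
            kroneckerMap_apply, Fintype.sum_prod_type, Fin.sum_univ_three]
        have h2 : (starRingEnd ℂ) (g a b) * g a b
            = ∑ k : Fin 3, ∑ i : Fin 3,
              (ψ a.1 a.2 k * (starRingEnd ℂ) (ψ b.1 b.2 k)) *
              ((starRingEnd ℂ) (ψ a.1 a.2 i) * ψ b.1 b.2 i) := by
          have hcg : (starRingEnd ℂ) (g a b)
              = ∑ k, ψ a.1 a.2 k * (starRingEnd ℂ) (ψ b.1 b.2 k) := (aux5_conj_sum _ _).symm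
          rw [hcg, hg, Finset.sum_mul_sum]
        rw [h1, h2, Finset.sum_comm, Finset.mul_sum]
        refine Finset.sum_congr rfl fun k _ => ?_
        rw [Finset.mul_sum]
        refine Finset.sum_congr rfl fun i _ => ?_
        rw [← hcc]
        ring
      constructor
      · intro a
        show 3 * (ρm * (Em a.1 a.2 ⊗ₖ Fm a.1 a.2)).trace = 1
        rw [hval a a, hdiagC a, _root_.map_one]
        norm_num
      · intro a b hab
        show 3 * (ρm * (Em a.1 a.2 ⊗ₖ Fm b.1 b.2)).trace = 0
        rw [hval a b, hedgeC a b hab, _root_.map_zero]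
        ring
  · -- backward direction
    rintro ⟨ρ, E, F, hρpsd, hρtr, hE, hF, hFits⟩
    set ρ1 : Matrix (Fin 3) (Fin 3) ℂ := ptr5 ρ with hρ1def
    have hρ1herm : ρ1ᴴ = ρ1 := ptr5_herm hρpsd.1
    -- edge traces are zero
    have htr0 : ∀ a b : GVert n × Fin 3, (triDec (gadgetGraph G)).Adj a b →
        (ρ * (E a.1 a.2 ⊗ₖ F b.1 b.2)).trace = 0 := by
      intro a b hab
      have h : 3 * (ρ * (E a.1 a.2 ⊗ₖ F b.1 b.2)).trace = 0 := hFits.2 a b hab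
      exact (mul_eq_zero.mp h).resolve_left (by norm_num)
    have hz : ∀ a b : GVert n × Fin 3, (triDec (gadgetGraph G)).Adj a b →
        (E a.1 a.2 ⊗ₖ F b.1 b.2) * ρ = 0 := fun a b hab =>
      aux5_kill hρpsd (aux5_kron_psd ((hE a.1).1 a.2) ((hF b.1).1 b.2)) (htr0 a b hab)
    -- exchange identities
    have hEq : ∀ a : GVert n × Fin 3,
        (E a.1 a.2 ⊗ₖ (1 : Matrix (Fin 3) (Fin 3) ℂ)) * ρ = (E a.1 a.2 ⊗ₖ F a.1 a.2) * ρ := by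
      intro a
      have h1 : (1 : Matrix (Fin 3) (Fin 3) ℂ) = ∑ z, F a.1 z := ((hF a.1).2).symm
      rw [h1, aux5_kron_sum_right, Finset.sum_mul, Finset.sum_eq_single a.2]
      · intro z _ hzne
        exact hz a (a.1, z) (triDec_adj_triangle _ _ fun h => hzne h.symm)
      · intro h
        exact absurd (Finset.mem_univ a.2) h
    have hEq2 : ∀ a : GVert n × Fin 3,
        ((1 : Matrix (Fin 3) (Fin 3) ℂ) ⊗ₖ F a.1 a.2) * ρ = (E a.1 a.2 ⊗ₖ F a.1 a.2) * ρ := by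
      intro a
      have h1 : (1 : Matrix (Fin 3) (Fin 3) ℂ) = ∑ z, E a.1 z := ((hE a.1).2).symm
      rw [h1, aux5_kron_sum_left, Finset.sum_mul, Finset.sum_eq_single a.2]
      · intro z _ hzne
        exact hz (a.1, z) a (triDec_adj_triangle _ _ hzne)
      · intro h
        exact absurd (Finset.mem_univ a.2) h
    -- products annihilate the reduced state
    have hprod : ∀ a b : GVert n × Fin 3, (triDec (gadgetGraph G)).Adj a b →
        E a.1 a.2 * E b.1 b.2 * ρ1 = 0 := by
      intro a b hab
      have hbig : ((E a.1 a.2 * E b.1 b.2) ⊗ₖ (1 : Matrix (Fin 3) (Fin 3) ℂ)) * ρ = 0 := by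
        have e1 : ((E a.1 a.2 * E b.1 b.2) ⊗ₖ (1 : Matrix (Fin 3) (Fin 3) ℂ))
            = (E a.1 a.2 ⊗ₖ (1 : Matrix (Fin 3) (Fin 3) ℂ)) *
              (E b.1 b.2 ⊗ₖ (1 : Matrix (Fin 3) (Fin 3) ℂ)) := by
          rw [← mul_kronecker_mul, mul_one]
        have e2 : (E a.1 a.2 ⊗ₖ (1 : Matrix (Fin 3) (Fin 3) ℂ)) *
            ((1 : Matrix (Fin 3) (Fin 3) ℂ) ⊗ₖ F b.1 b.2) = E a.1 a.2 ⊗ₖ F b.1 b.2 := by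
          rw [← mul_kronecker_mul, mul_one, one_mul]
        rw [e1, mul_assoc, hEq b, ← hEq2 b, ← mul_assoc, e2]
        exact hz a b hab
      have h := congrArg ptr5 hbig
      rwa [ptr5_kron_one_mul, ptr5_zero] at h
    -- the columns are nonzero
    have hNne : ∀ a : GVert n × Fin 3, E a.1 a.2 * ρ1 ≠ 0 := by
      intro a hcon
      have htrE : (ρ * (E a.1 a.2 ⊗ₖ (1 : Matrix (Fin 3) (Fin 3) ℂ))).trace = 0 := by
        rw [Matrix.trace_mul_comm]
        have h : ((E a.1 a.2 ⊗ₖ (1 : Matrix (Fin 3) (Fin 3) ℂ)) * ρ).trace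
            = (E a.1 a.2 * ρ1).trace := by
          rw [← ptr5_kron_one_mul, ptr5_trace]
        rw [h, hcon, Matrix.trace_zero]
      have hkill := aux5_kill hρpsd (aux5_kron_psd ((hE a.1).1 a.2) Matrix.PosSemidef.one) htrE
      have hEF : (E a.1 a.2 ⊗ₖ F a.1 a.2) * ρ = 0 := by
        have e : E a.1 a.2 ⊗ₖ F a.1 a.2 = ((1 : Matrix (Fin 3) (Fin 3) ℂ) ⊗ₖ F a.1 a.2) *
            (E a.1 a.2 ⊗ₖ (1 : Matrix (Fin 3) (Fin 3) ℂ)) := by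
          rw [← mul_kronecker_mul, mul_one, one_mul]
        rw [e, mul_assoc, hkill, mul_zero]
      have hdg : 3 * (ρ * (E a.1 a.2 ⊗ₖ F a.1 a.2)).trace = 1 := hFits.1 a
      rw [Matrix.trace_mul_comm, hEF, Matrix.trace_zero, mul_zero] at hdg
      exact zero_ne_one hdg
    -- choose a nonzero entry of each column matrix
    have hex : ∀ a : GVert n × Fin 3, ∃ p : Fin 3 × Fin 3, (E a.1 a.2 * ρ1) p.1 p.2 ≠ 0 := by
      intro a
      by_contra hcon
      push_neg at hcon
      exact hNne a (Matrix.ext fun i j => hcon (i, j))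
    choose pf hpf using hex
    set wv : (GVert n × Fin 3) → Fin 3 → ℂ := fun a i => (E a.1 a.2 * ρ1) i (pf a).2 with hwv
    set rv : (GVert n × Fin 3) → ℝ := fun a => ∑ i, Complex.normSq (wv a i) with hrv
    have hrpos : ∀ a, 0 < rv a := by
      intro a
      apply Finset.sum_pos' (fun i _ => Complex.normSq_nonneg _)
      exact ⟨(pf a).1, Finset.mem_univ _, Complex.normSq_pos.mpr (hpf a)⟩
    have hgram : ∀ a b : GVert n × Fin 3, ∑ i, (starRingEnd ℂ) (wv a i) * wv b i
        = (ρ1 * (E a.1 a.2 * E b.1 b.2 * ρ1)) (pf a).2 (pf b).2 := by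
      intro a b
      have h1 : ∑ i, (starRingEnd ℂ) (wv a i) * wv b i
          = ((E a.1 a.2 * ρ1)ᴴ * (E b.1 b.2 * ρ1)) (pf a).2 (pf b).2 := by
        rw [Matrix.mul_apply]
        exact Finset.sum_congr rfl fun i _ => by rw [Matrix.conjTranspose_apply]; rfl
      rw [h1, Matrix.conjTranspose_mul, hρ1herm, ((hE a.1).1 a.2).1]
      simp only [mul_assoc]
    refine ⟨fun y z i => wv (y, z) i / ((Real.sqrt (rv (y, z)) : ℝ) : ℂ), ?_, ?_⟩
    · -- diagonal entries
      intro v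
      show (‖∑ j, (starRingEnd ℂ) (wv v j / ((Real.sqrt (rv v) : ℝ) : ℂ)) *
        (wv v j / ((Real.sqrt (rv v) : ℝ) : ℂ))‖) ^ 2 = 1
      have hnum : ∑ j, (starRingEnd ℂ) (wv v j / ((Real.sqrt (rv v) : ℝ) : ℂ)) *
          (wv v j / ((Real.sqrt (rv v) : ℝ) : ℂ)) = 1 := by
        have hsq : ((Real.sqrt (rv v) : ℝ) : ℂ) * ((Real.sqrt (rv v) : ℝ) : ℂ)
            = ((rv v : ℝ) : ℂ) := by
          rw [← Complex.ofReal_mul, Real.mul_self_sqrt (hrpos v).le]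
        have hterm : ∀ j, (starRingEnd ℂ) (wv v j / ((Real.sqrt (rv v) : ℝ) : ℂ)) *
            (wv v j / ((Real.sqrt (rv v) : ℝ) : ℂ))
            = ((Complex.normSq (wv v j) : ℝ) : ℂ) / ((rv v : ℝ) : ℂ) := by
          intro j
          rw [map_div₀, Complex.conj_ofReal, div_mul_div_comm, hsq,
            ← Complex.normSq_eq_conj_mul_self]
        rw [Finset.sum_congr rfl fun j _ => hterm j, ← Finset.sum_div]
        rw [show ∑ j, ((Complex.normSq (wv v j) : ℝ) : ℂ) = ((rv v : ℝ) : ℂ) by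
          rw [hrv]; push_cast; rfl]
        exact div_self (Complex.ofReal_ne_zero.mpr (hrpos v).ne')
      rw [hnum]
      simp
    · -- edges
      intro a b hab
      show (‖∑ j, (starRingEnd ℂ) (wv a j / ((Real.sqrt (rv a) : ℝ) : ℂ)) *
        (wv b j / ((Real.sqrt (rv b) : ℝ) : ℂ))‖) ^ 2 = 0
      have hnum : ∑ j, (starRingEnd ℂ) (wv a j / ((Real.sqrt (rv a) : ℝ) : ℂ)) *
          (wv b j / ((Real.sqrt (rv b) : ℝ) : ℂ)) = 0 := by
        have hterm : ∀ j, (starRingEnd ℂ) (wv a j / ((Real.sqrt (rv a) : ℝ) : ℂ)) *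
            (wv b j / ((Real.sqrt (rv b) : ℝ) : ℂ))
            = ((starRingEnd ℂ) (wv a j) * wv b j) /
              (((Real.sqrt (rv a) : ℝ) : ℂ) * ((Real.sqrt (rv b) : ℝ) : ℂ)) := by
          intro j
          rw [map_div₀, Complex.conj_ofReal, div_mul_div_comm]
        rw [Finset.sum_congr rfl fun j _ => hterm j, ← Finset.sum_div, hgram a b,
          hprod a b hab, Matrix.mul_zero, Matrix.zero_apply, zero_div]
      rw [hnum]
      simp
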